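/- Let y ∈ ℚ[[z,w]] be the unique solution with zero constant term of y = z·w(1+y)^3/(1−wy). Then for n ≥ 3, the coefficient of z^{n-2} w^k in y equals (1/(n-2)) * binom(3n-6, n+k-1) * binom(k-1, n-3), and the coefficient of z^{n-2} w^k in y^2 equals (2/(n-2)) * binom(3n-6, n+k) * binom(k-1, n-3). -/

import Mathlib

open PowerSeries

/-- The series `w`, viewed as a constant (in `z`) power series in `ℚ[[w]][[z]]`. -/
noncomputable def Wvar : PowerSeries (PowerSeries ℚ) := C (R := PowerSeries ℚ) X

/-- Binomial coefficient of integers, taken to be `0` when `b < 0` or `b > a`. -/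
def ichoose (a b : ℤ) : ℤ :=
  if 0 ≤ b ∧ b ≤ a then (a.toNat.choose b.toNat : ℤ) else 0

open Finset


private lemma choose_pascal_aux (m N : ℕ) :
    (m+1+N).choose N = (m+N).choose (m+1) + (m+N).choose N := by
  cases N with
  | zero => simp [Nat.choose_eq_zero_of_lt (by omega : m < m+1)]
  | succ s =>
    rw [show m+1+(s+1) = (m+1+s)+1 from by omega, Nat.choose_succ_succ]
    have h2 : (m+1+s).choose s = (m+s+1).choose (m+1) := by
      have h3 := Nat.choose_symm (show s ≤ m+1+s by omega)
      rw [show m+1+s-s = m+1 from by omega] at h3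
      rw [← h3, show m+1+s = m+s+1 from by omega]
    rw [h2, show m+(s+1) = m+s+1 from by omega, show m+1+s = m+s+1 from by omega]

private lemma choose_symm_aux (m N : ℕ) : (m+1+N).choose N = (m+N+1).choose (m+1) := by
  have h3 := Nat.choose_symm (show N ≤ m+1+N by omega)
  rw [show m+1+N-N = m+1 from by omega] at h3
  rw [← h3, show m+1+N = m+N+1 from by omega]

private lemma telescope {A : Type*} [CommRing A] (t : A) (m : ℕ) : ∀ N : ℕ,
    (1 - t) * ∑ i ∈ Finset.range N, ((m+1+i).choose i : A) * t^i =
      ∑ i ∈ Finset.range N, ((m+i).choose i : A) * t^i - ((m+N).choose (m+1) : A) * t^N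
  | 0 => by simp [Nat.choose_eq_zero_of_lt (by omega : m < m+1)]
  | (N+1) => by
    rw [Finset.sum_range_succ, Finset.sum_range_succ, mul_add, telescope t m N]
    have h1 : ((m+1+N).choose N : A) = ((m+N).choose (m+1) : A) + ((m+N).choose N : A) := by
      rw [← Nat.cast_add]; exact congrArg _ (choose_pascal_aux m N)
    have h2 : ((m+1+N).choose N : A) = ((m+(N+1)).choose (m+1) : A) := by
      refine congrArg _ ?_
      rw [show m+(N+1) = m+N+1 from by omega]
      exact choose_symm_aux m N
    linear_combination t^N * h1 - t^(N+1) * h2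

private lemma trunc_inv_pow {A : Type*} [CommRing A] (t : A) (N : ℕ) : ∀ m : ℕ,
    ∃ g : A, (1-t)^(m+1) * ∑ i ∈ Finset.range N, ((m+i).choose i : A) * t^i = 1 + t^N * g
  | 0 => by
    refine ⟨-1, ?_⟩
    simp only [Nat.zero_add, Nat.choose_self, Nat.cast_one, one_mul, pow_one, zero_add]
    linear_combination (-1 : A) * geom_sum_mul t N
  | (m+1) => by
    obtain ⟨g, hg⟩ := trunc_inv_pow t N m
    refine ⟨g - ((m+N).choose (m+1) : A) * (1-t)^(m+1), ?_⟩
    have ht := telescope t m N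
    linear_combination (1-t)^(m+1) * ht + hg

private lemma coeff_natCast_mul' {A : Type*} [CommRing A] (nc : ℕ) (f : PowerSeries A) (nn : ℕ) :
    coeff (R := A) nn ((nc : PowerSeries A) * f) = (nc : A) * coeff (R := A) nn f := by
  rw [← map_natCast (C (R := A)) nc, coeff_C_mul]

private lemma resid {K : Type*} [Field K] [CharZero K] (U : (PowerSeries K)ˣ)
    (Y : PowerSeries K) (hY : Y = X * (U : PowerSeries K)) (q : ℕ) :
    coeff (R := K) q ((((U⁻¹ : (PowerSeries K)ˣ) : PowerSeries K))^(q+1) * (d⁄dX K) Y) =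
      if q = 0 then 1 else 0 := by
  set u : PowerSeries K := (U : PowerSeries K) with hudef
  set c : PowerSeries K := ((U⁻¹ : (PowerSeries K)ˣ) : PowerSeries K) with hcdef
  have hcu : c * u = 1 := by
    rw [hcdef, hudef, ← Units.val_mul, inv_mul_cancel, Units.val_one]
  have hDY : (d⁄dX K) Y = u + X * (d⁄dX K) u := by
    rw [hY, Derivation.leibniz]
    simp only [smul_eq_mul, derivative_X, mul_one]
    ring
  have hex : c^(q+1) * ((d⁄dX K) Y) = c^q + X * ((d⁄dX K) u * c^(q+1)) := by
    rw [hDY]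
    have h : c^(q+1) * (u + X * (d⁄dX K) u) =
        c^q * (c * u) + X * ((d⁄dX K) u * c^(q+1)) := by ring
    rw [h, hcu, mul_one]
  rw [hex]
  rcases Nat.eq_zero_or_pos q with hq | hq
  · subst hq
    rw [if_pos rfl]
    simp [coeff_zero_eq_constantCoeff, map_add, map_mul, constantCoeff_X]
  · obtain ⟨s, rfl⟩ : ∃ s, q = s + 1 := ⟨q-1, by omega⟩
    rw [if_neg (by omega)]
    rw [map_add, coeff_succ_X_mul]
    have h1 : c * (d⁄dX K) u + u * (d⁄dX K) c = 0 := by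
      have h0 := congrArg (d⁄dX K) hcu
      rw [Derivation.leibniz] at h0
      simpa [smul_eq_mul, add_comm] using h0
    have hDc : (d⁄dX K) c = -(c^2 * (d⁄dX K) u) := by
      linear_combination c * h1 - ((d⁄dX K) c) * hcu
    have hpow : (d⁄dX K) (c^(s+1)) = -((s+1 : ℕ) • (c^(s+2) * (d⁄dX K) u)) := by
      rw [Derivation.leibniz_pow, hDc]
      simp only [smul_eq_mul, nsmul_eq_mul, Nat.add_sub_cancel]
      ring
    have key : coeff (R := K) (s+1) (c^(s+1)) * ((s:K)+1) =
        -(((s:K)+1) * coeff (R := K) s (c^(s+2) * (d⁄dX K) u)) := by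
      have h2 := coeff_derivative (c^(s+1)) s
      rw [hpow] at h2
      rw [map_neg, map_nsmul, nsmul_eq_mul] at h2
      push_cast at h2 ⊢
      linear_combination -h2
    have hs : ((s:K)+1) ≠ 0 := Nat.cast_add_one_ne_zero s
    have hmain : (coeff (R := K) (s+1) (c^(s+1)) + coeff (R := K) s ((d⁄dX K) u * c^(s+2))) * ((s:K)+1) = 0 := by
      rw [mul_comm ((d⁄dX K) u) (c^(s+2))]
      linear_combination key
    exact (mul_eq_zero.mp hmain).resolve_right hs

private lemma mainlem {K : Type*} [Field K] [CharZero K] (w : Kˣ) (Y : PowerSeries K)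
    (hY0 : constantCoeff (R := K) Y = 0)
    (hY : Y * (1 - C (R := K) (w:K) * Y) = X * C (R := K) (w:K) * (1 + Y)^3)
    (j m : ℕ) (hj : 1 ≤ j) (hjm : j ≤ m) :
    (m : K) * coeff (R := K) m (Y^j) =
      (j : K) * ∑ i ∈ Finset.range (m-j+1),
        (((m-1+i).choose i : K) * ((3*m).choose (m-j-i) : K) * (w:K)^(m+i)) := by
  set p := m - j with hp
  obtain ⟨u, hu⟩ := (X_dvd_iff).mpr hY0
  have hXne : (X : PowerSeries K) ≠ 0 := X_ne_zero
  have hequ : u * (1 - C (R := K) (w:K) * Y) = C (R := K) (w:K) * (1 + Y)^3 := by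
    apply mul_left_cancel₀ hXne
    calc X * (u * (1 - C (R := K) (w:K) * Y)) = Y * (1 - C (R := K) (w:K) * Y) := by rw [hu]; ring
    _ = X * (C (R := K) (w:K) * (1+Y)^3) := by rw [hY]; ring
  have hcu : constantCoeff (R := K) u = (w : K) := by
    have h := congrArg (constantCoeff (R := K)) hequ
    simpa [map_mul, map_sub, map_add, map_pow, map_one, hY0, constantCoeff_C,
      constantCoeff_X] using h
  have hUu : IsUnit u := isUnit_iff_constantCoeff.mpr (by rw [hcu]; exact w.isUnit)
  obtain ⟨U, hU⟩ := hUu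
  have hVu : IsUnit (1 - C (R := K) (w:K) * Y) :=
    isUnit_iff_constantCoeff.mpr (by
      simp [map_sub, map_mul, hY0, constantCoeff_C])
  obtain ⟨V, hV⟩ := hVu
  set c : PowerSeries K := ((U⁻¹ : (PowerSeries K)ˣ) : PowerSeries K) with hcdef
  set d : PowerSeries K := ((V⁻¹ : (PowerSeries K)ˣ) : PowerSeries K) with hddef
  have hcu1 : c * u = 1 := by
    rw [hcdef, ← hU, ← Units.val_mul, inv_mul_cancel, Units.val_one]
  have hd1 : d * (1 - C (R := K) (w:K) * Y) = 1 := by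
    rw [hddef, ← hV, ← Units.val_mul, inv_mul_cancel, Units.val_one]
  -- master equation
  have hmaster : u^m * (1 - C (R := K) (w:K) * Y)^m = (C (R := K) (w:K))^m * (1+Y)^(3*m) := by
    rw [← mul_pow, hequ, mul_pow, ← pow_mul]
  have hu_m : u^m = (C (R := K) (w:K))^m * (1+Y)^(3*m) * d^m := by
    have hdV : d^m * (1 - C (R := K) (w:K) * Y)^m = 1 := by rw [← mul_pow, hd1, one_pow]
    calc u^m = u^m * (d^m * (1 - C (R := K) (w:K) * Y)^m) := by rw [hdV, mul_one]
    _ = (u^m * (1 - C (R := K) (w:K) * Y)^m) * d^m := by ring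
    _ = (C (R := K) (w:K))^m * (1+Y)^(3*m) * d^m := by rw [hmaster]
  -- truncation of d^m
  obtain ⟨g, hg⟩ := trunc_inv_pow (C (R := K) (w:K) * Y) (p+1) (m-1)
  rw [show m-1+1 = m from by omega] at hg
  have hone : (1 - C (R := K) (w:K) * Y)^m * d^m = 1 := by
    rw [← mul_pow, mul_comm _ d, hd1, one_pow]
  have hS : (∑ i ∈ Finset.range (p+1), ((m-1+i).choose i : PowerSeries K) * (C (R := K) (w:K) * Y)^i)
      = d^m + (C (R := K) (w:K) * Y)^(p+1) * g * d^m := by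
    calc (∑ i ∈ Finset.range (p+1), ((m-1+i).choose i : PowerSeries K) * (C (R := K) (w:K) * Y)^i)
        = ((1 - C (R := K) (w:K) * Y)^m * d^m) *
          (∑ i ∈ Finset.range (p+1), ((m-1+i).choose i : PowerSeries K) * (C (R := K) (w:K) * Y)^i) := by
          rw [hone, one_mul]
    _ = ((1 - C (R := K) (w:K) * Y)^m *
          (∑ i ∈ Finset.range (p+1), ((m-1+i).choose i : PowerSeries K) * (C (R := K) (w:K) * Y)^i)) * d^m := by
          ring
    _ = (1 + (C (R := K) (w:K) * Y)^(p+1) * g) * d^m := by rw [hg]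
    _ = d^m + (C (R := K) (w:K) * Y)^(p+1) * g * d^m := by ring
  have hdm : d^m = (∑ i ∈ Finset.range (p+1),
      ((m-1+i).choose i : PowerSeries K) * (C (R := K) (w:K) * Y)^i)
      - (C (R := K) (w:K) * Y)^(p+1) * g * d^m := by linear_combination -hS
  -- residue computations
  have hF : ∀ r : ℕ, coeff (R := K) p (c^(p+1) * ((d⁄dX K) Y) * Y^r) = if r = p then 1 else 0 := by
    intro r
    have hYr : Y^r = X^r * u^r := by rw [hu, mul_pow]
    rcases le_or_gt r p with hr | hr
    · have hcur : c^r * u^r = 1 := by rw [← mul_pow, hcu1, one_pow]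
      have h1 : c^(p+1) * ((d⁄dX K) Y) * Y^r = X^r * (c^(p-r+1) * ((d⁄dX K) Y)) := by
        rw [hYr, show p+1 = (p-r+1) + r from by omega, pow_add]
        calc c^(p-r+1) * c^r * ((d⁄dX K) Y) * (X^r * u^r)
            = X^r * (c^(p-r+1) * ((d⁄dX K) Y)) * (c^r * u^r) := by ring
        _ = X^r * (c^(p-r+1) * ((d⁄dX K) Y)) := by rw [hcur, mul_one]
      rw [h1, coeff_X_pow_mul' _ _ _, if_pos hr,
        resid U Y (by rw [hU]; exact hu) (p-r)]
      by_cases h : r = p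
      · rw [if_pos h, if_pos (by omega)]
      · rw [if_neg (by omega), if_neg h]
    · have h1 : c^(p+1) * ((d⁄dX K) Y) * Y^r = X^r * (c^(p+1) * ((d⁄dX K) Y) * u^r) := by
        rw [hYr]; ring
      rw [h1, coeff_X_pow_mul' _ _ _, if_neg (by omega), if_neg (by omega)]
  have hG : ∀ i : ℕ, i ≤ p →
      coeff (R := K) p (c^(p+1) * ((d⁄dX K) Y) * (Y^i * (1+Y)^(3*m)))
        = ((3*m).choose (p-i) : K) := by
    intro i hip
    have hexp : (1+Y)^(3*m) = ∑ l ∈ Finset.range (3*m+1),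
        Y^l * (((3*m).choose l : PowerSeries K)) := by
      rw [add_comm (1 : PowerSeries K) Y, add_pow]
      simp
    rw [hexp, Finset.mul_sum, Finset.mul_sum, map_sum]
    have hterm : ∀ l : ℕ,
        coeff (R := K) p (c^(p+1) * ((d⁄dX K) Y) * (Y^i * (Y^l * (((3*m).choose l : PowerSeries K)))))
          = ((3*m).choose l : K) * (if i + l = p then 1 else 0) := by
      intro l
      have h2 : c^(p+1) * ((d⁄dX K) Y) * (Y^i * (Y^l * (((3*m).choose l : PowerSeries K))))
          = ((3*m).choose l : PowerSeries K) * (c^(p+1) * ((d⁄dX K) Y) * Y^(i+l)) := by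
        rw [pow_add]; ring
      rw [h2, coeff_natCast_mul', hF (i+l)]
    simp only [hterm]
    rcases le_or_gt (p-i) (3*m) with hle | hlt
    · rw [Finset.sum_eq_single (p-i)]
      · rw [if_pos (by omega), mul_one]
      · intro l _ hne
        rw [if_neg (by omega), mul_zero]
      · intro habs
        exact absurd (Finset.mem_range.mpr (by omega)) habs
    · rw [Finset.sum_eq_zero, Nat.choose_eq_zero_of_lt hlt, Nat.cast_zero]
      intro l hl
      rw [Finset.mem_range] at hl
      rw [if_neg (by omega), mul_zero]
  -- the key coefficient identity
  have h4 : u^(j-1) = c^(p+1) * u^m := by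
    have hone' : c^(p+1) * u^(p+1) = 1 := by rw [← mul_pow, hcu1, one_pow]
    calc u^(j-1) = (c^(p+1) * u^(p+1)) * u^(j-1) := by rw [hone', one_mul]
    _ = c^(p+1) * (u^(p+1) * u^(j-1)) := by ring
    _ = c^(p+1) * u^m := by rw [← pow_add, show p+1+(j-1) = m from by omega]
  have key : coeff (R := K) p (u^(j-1) * ((d⁄dX K) Y)) =
      ∑ i ∈ Finset.range (p+1),
        (((m-1+i).choose i : K) * ((3*m).choose (p-i) : K) * (w:K)^(m+i)) := by
    have heq : u^(j-1) * ((d⁄dX K) Y) =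
        (C (R := K) (w:K))^m * (1+Y)^(3*m) * (c^(p+1) * ((d⁄dX K) Y)) * d^m := by
      rw [h4, hu_m]; ring
    rw [heq, hdm, mul_sub, map_sub]
    have hjunk : coeff (R := K) p ((C (R := K) (w:K))^m * (1+Y)^(3*m) * (c^(p+1) * ((d⁄dX K) Y)) *
        ((C (R := K) (w:K) * Y)^(p+1) * g * d^m)) = 0 := by
      have hYp : (C (R := K) (w:K) * Y)^(p+1) = X^(p+1) * ((C (R := K) (w:K))^(p+1) * u^(p+1)) := by
        rw [hu]; ring
      have h5 : (C (R := K) (w:K))^m * (1+Y)^(3*m) * (c^(p+1) * ((d⁄dX K) Y)) *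
          ((C (R := K) (w:K) * Y)^(p+1) * g * d^m)
          = X^(p+1) * ((C (R := K) (w:K))^m * (1+Y)^(3*m) * (c^(p+1) * ((d⁄dX K) Y)) *
            ((C (R := K) (w:K))^(p+1) * u^(p+1) * g * d^m)) := by
        rw [hYp]; ring
      rw [h5, coeff_X_pow_mul' _ _ _, if_neg (by omega)]
    rw [hjunk, sub_zero, Finset.mul_sum, map_sum]
    apply Finset.sum_congr rfl
    intro i hi
    rw [Finset.mem_range] at hi
    have hip : i ≤ p := by omega
    have hYi : (C (R := K) (w:K) * Y)^i = (C (R := K) (w:K))^i * Y^i := by ring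
    have h6 : (C (R := K) (w:K))^m * (1+Y)^(3*m) * (c^(p+1) * ((d⁄dX K) Y)) *
        (((m-1+i).choose i : PowerSeries K) * (C (R := K) (w:K) * Y)^i)
        = C (R := K) ((w:K)^(m+i)) * (((m-1+i).choose i : PowerSeries K) *
          (c^(p+1) * ((d⁄dX K) Y) * (Y^i * (1+Y)^(3*m)))) := by
      rw [hYi, pow_add (w:K) m i, map_mul (C (R := K)), map_pow, map_pow]
      ring
    rw [h6, coeff_C_mul, coeff_natCast_mul', hG i hip]
    ring
  -- assembling
  obtain ⟨m₁, rfl⟩ : ∃ m₁, m = m₁ + 1 := ⟨m-1, by omega⟩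
  have hder : coeff (R := K) m₁ ((d⁄dX K) (Y^j)) = coeff (R := K) (m₁+1) (Y^j) * ((m₁ : K)+1) := by
    rw [coeff_derivative]; try push_cast; try ring
  have hleib : (d⁄dX K) (Y^j) = (j : ℕ) • (Y^(j-1) * ((d⁄dX K) Y)) := by
    rw [Derivation.leibniz_pow]
    simp only [smul_eq_mul, nsmul_eq_mul]
    try ring
  have hYj : Y^(j-1) = X^(j-1) * u^(j-1) := by rw [hu, mul_pow]
  have hsplit : Y^(j-1) * ((d⁄dX K) Y) = X^(j-1) * (u^(j-1) * ((d⁄dX K) Y)) := by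
    rw [hYj]; ring
  have hco : coeff (R := K) m₁ ((d⁄dX K) (Y^j)) = (j:K) * coeff (R := K) p (u^(j-1) * ((d⁄dX K) Y)) := by
    rw [hleib, hsplit, map_nsmul, nsmul_eq_mul,
      coeff_X_pow_mul' _ _ _, if_pos (show j-1 ≤ m₁ by omega),
      show m₁ - (j-1) = p from by omega]
  have hfin : ((m₁+1 : ℕ) : K) * coeff (R := K) (m₁+1) (Y^j) =
      (j:K) * coeff (R := K) p (u^(j-1) * ((d⁄dX K) Y)) := by
    rw [← hco, hder]; push_cast; ring
  rw [hfin, key]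

private instance : CharZero (LaurentSeries ℚ) :=
  charZero_of_injective_algebraMap (algebraMap ℚ (LaurentSeries ℚ)).injective

private lemma transfer (y : PowerSeries (PowerSeries ℚ))
    (h0 : constantCoeff (R := PowerSeries ℚ) y = 0)
    (hy : y * (1 - Wvar * y) = X * Wvar * (1 + y) ^ 3)
    (j m k : ℕ) (hj : 1 ≤ j) (hjm : j ≤ m) :
    (m : ℚ) * coeff (R := ℚ) k (coeff (R := PowerSeries ℚ) m (y^j)) =
      if m ≤ k ∧ k ≤ m + (m-j) then
        (j : ℚ) * ((m-1+(k-m)).choose (k-m) : ℚ) * ((3*m).choose (m-j-(k-m)) : ℚ)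
      else 0 := by
  set τ : PowerSeries ℚ →+* LaurentSeries ℚ := HahnSeries.ofPowerSeries ℤ ℚ with hτ
  have hτinj : Function.Injective τ := HahnSeries.ofPowerSeries_injective
  have hwu : IsUnit (τ X) := by
    apply isUnit_iff_ne_zero.mpr
    intro h
    exact X_ne_zero (hτinj (by rw [h, map_zero]))
  set Y : PowerSeries (LaurentSeries ℚ) := PowerSeries.map τ y with hYdef
  have hY0 : constantCoeff (R := LaurentSeries ℚ) Y = 0 := by
    rw [hYdef, ← coeff_zero_eq_constantCoeff_apply, coeff_map,
      coeff_zero_eq_constantCoeff_apply, h0, map_zero]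
  have hYeq : Y * (1 - C (R := LaurentSeries ℚ) (hwu.unit : LaurentSeries ℚ) * Y) =
      X * C (R := LaurentSeries ℚ) (hwu.unit : LaurentSeries ℚ) * (1 + Y)^3 := by
    rw [IsUnit.unit_spec]
    have h := congrArg (PowerSeries.map τ) hy
    simp only [map_mul, map_sub, map_add, map_one, map_pow, PowerSeries.map_X, Wvar,
      PowerSeries.map_C, hYdef] at h ⊢
    exact h
  have H := mainlem hwu.unit Y hY0 hYeq j m hj hjm
  -- rewrite both sides as images under τ
  have hL : (m : LaurentSeries ℚ) * coeff (R := LaurentSeries ℚ) m (Y^j) =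
      τ ((m : PowerSeries ℚ) * coeff (R := PowerSeries ℚ) m (y^j)) := by
    rw [hYdef, ← map_pow, coeff_map, map_mul, map_natCast]
  have hR : (j : LaurentSeries ℚ) * ∑ i ∈ Finset.range (m-j+1),
        (((m-1+i).choose i : LaurentSeries ℚ) * ((3*m).choose (m-j-i) : LaurentSeries ℚ)
          * (hwu.unit : LaurentSeries ℚ)^(m+i)) =
      τ ((j : PowerSeries ℚ) * ∑ i ∈ Finset.range (m-j+1),
        (((m-1+i).choose i : PowerSeries ℚ) * ((3*m).choose (m-j-i) : PowerSeries ℚ)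
          * X^(m+i))) := by
    rw [map_mul, map_natCast, map_sum]
    congr 1
    apply Finset.sum_congr rfl
    intro i _
    rw [map_mul, map_mul, map_natCast, map_natCast, map_pow, IsUnit.unit_spec]
  rw [hL, hR] at H
  have H2 := hτinj H
  have hterm : ∀ i : ℕ,
      coeff (R := ℚ) k ((j : PowerSeries ℚ) * ((((m-1+i).choose i : PowerSeries ℚ) *
          ((3*m).choose (m-j-i) : PowerSeries ℚ) * X^(m+i)))) =
        (j : ℚ) * (((m-1+i).choose i : ℚ) * ((3*m).choose (m-j-i) : ℚ) *
          (if k = m+i then 1 else 0)) := by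
    intro i
    rw [show (j : PowerSeries ℚ) * ((((m-1+i).choose i : PowerSeries ℚ) *
          ((3*m).choose (m-j-i) : PowerSeries ℚ) * X^(m+i)))
        = (j : PowerSeries ℚ) * (((m-1+i).choose i : PowerSeries ℚ) *
          (((3*m).choose (m-j-i) : PowerSeries ℚ) * X^(m+i))) from by ring,
      coeff_natCast_mul', coeff_natCast_mul', coeff_natCast_mul', coeff_X_pow]
    ring
  have H4 : (m:ℚ) * coeff (R := ℚ) k (coeff (R := PowerSeries ℚ) m (y^j)) =
      ∑ i ∈ Finset.range (m-j+1), (j:ℚ) * (((m-1+i).choose i : ℚ) *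
        ((3*m).choose (m-j-i) : ℚ) * (if k = m+i then 1 else 0)) := by
    rw [← coeff_natCast_mul' m (coeff (R := PowerSeries ℚ) m (y^j)) k, H2, Finset.mul_sum, map_sum]
    exact Finset.sum_congr rfl (fun i _ => hterm i)
  rw [H4]
  by_cases hc : m ≤ k ∧ k ≤ m + (m-j)
  · rw [if_pos hc]
    rw [Finset.sum_eq_single (k-m)]
    · rw [if_pos (by omega), mul_one, show m-1+(k-m) = m-1+(k-m) from rfl]
      ring
    · intro i _ hne
      rw [if_neg (by omega), mul_zero, mul_zero]
    · intro habs
      exact absurd (Finset.mem_range.mpr (by omega)) habs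
  · rw [if_neg hc]
    apply Finset.sum_eq_zero
    intro i hi
    rw [Finset.mem_range] at hi
    rw [if_neg (by omega), mul_zero, mul_zero]

/-- Let `y ∈ ℚ[[z,w]]` be the series with zero constant term satisfying
`y = z·w(1+y)³/(1-wy)` (stated multiplied out). Then for `n ≥ 3`, the coefficient
of `z^(n-2)·wᵏ` in `y` is `(1/(n-2))·C(3n-6, n+k-1)·C(k-1, n-3)` and in `y²` is
`(2/(n-2))·C(3n-6, n+k)·C(k-1, n-3)`. -/
theorem stmt19 (y : PowerSeries (PowerSeries ℚ))
    (h0 : constantCoeff (R := PowerSeries ℚ) y = 0)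
    (hy : y * (1 - Wvar * y) = X * Wvar * (1 + y) ^ 3)
    (n k : ℕ) (hn : 3 ≤ n) :
    coeff (R := ℚ) k (coeff (R := PowerSeries ℚ) (n - 2) y) =
      (ichoose (3 * (n : ℤ) - 6) ((n : ℤ) + (k : ℤ) - 1) *
        ichoose ((k : ℤ) - 1) ((n : ℤ) - 3) : ℤ) / ((n : ℚ) - 2) ∧
    coeff (R := ℚ) k (coeff (R := PowerSeries ℚ) (n - 2) (y ^ 2)) =
      2 * (ichoose (3 * (n : ℤ) - 6) ((n : ℤ) + (k : ℤ)) *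
        ichoose ((k : ℤ) - 1) ((n : ℤ) - 3) : ℤ) / ((n : ℚ) - 2) := by
  set m := n - 2 with hm
  have hm1 : 1 ≤ m := by omega
  have hmQ : ((n:ℚ) - 2) = (m:ℚ) := by
    rw [hm]; push_cast [Nat.cast_sub (show 2 ≤ n by omega)]; ring
  have hmne : ((m:ℚ)) ≠ 0 := Nat.cast_ne_zero.mpr (by omega)
  constructor
  · have H := transfer y h0 hy 1 m k le_rfl hm1
    rw [pow_one] at H
    rw [hmQ, eq_div_iff hmne, mul_comm _ ((m:ℚ)), H]
    by_cases hc : m ≤ k ∧ k ≤ m + (m - 1)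
    · rw [if_pos hc]
      have e1 : ichoose (3*(n:ℤ)-6) ((n:ℤ)+(k:ℤ)-1) = ((3*m).choose (m-1-(k-m)) : ℤ) := by
        unfold ichoose
        rw [if_pos (by constructor <;> omega)]
        congr 1
        rw [show (3*(n:ℤ)-6).toNat = 3*m from by omega,
          show ((n:ℤ)+(k:ℤ)-1).toNat = m+k+1 from by omega]
        have h3 := Nat.choose_symm (show m-1-(k-m) ≤ 3*m by omega)
        rw [show 3*m - (m-1-(k-m)) = m+k+1 from by omega] at h3
        exact h3
      have e2 : ichoose ((k:ℤ)-1) ((n:ℤ)-3) = ((m-1+(k-m)).choose (k-m) : ℤ) := by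
        unfold ichoose
        rw [if_pos (by constructor <;> omega)]
        congr 1
        rw [show ((k:ℤ)-1).toNat = k-1 from by omega,
          show ((n:ℤ)-3).toNat = m-1 from by omega,
          show m-1+(k-m) = k-1 from by omega]
        have h3 := Nat.choose_symm (show k-m ≤ k-1 by omega)
        rw [show k-1-(k-m) = m-1 from by omega] at h3
        exact h3
      rw [e1, e2]
      push_cast
      ring
    · rw [if_neg hc]
      have hz : ichoose (3*(n:ℤ)-6) ((n:ℤ)+(k:ℤ)-1) * ichoose ((k:ℤ)-1) ((n:ℤ)-3) = 0 := by
        by_cases hk : k < m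
        · have hz2 : ichoose ((k:ℤ)-1) ((n:ℤ)-3) = 0 := by
            unfold ichoose; rw [if_neg (by rintro ⟨h1, h2⟩; omega)]
          rw [hz2, mul_zero]
        · have hz1 : ichoose (3*(n:ℤ)-6) ((n:ℤ)+(k:ℤ)-1) = 0 := by
            unfold ichoose; rw [if_neg (by rintro ⟨h1, h2⟩; omega)]
          rw [hz1, zero_mul]
      rw [hz]
      norm_num
  · by_cases hn4 : 4 ≤ n
    · have hm2 : 2 ≤ m := by omega
      have H := transfer y h0 hy 2 m k (by omega) hm2
      rw [hmQ, eq_div_iff hmne, mul_comm _ ((m:ℚ)), H]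
      by_cases hc : m ≤ k ∧ k ≤ m + (m - 2)
      · rw [if_pos hc]
        have e1 : ichoose (3*(n:ℤ)-6) ((n:ℤ)+(k:ℤ)) = ((3*m).choose (m-2-(k-m)) : ℤ) := by
          unfold ichoose
          rw [if_pos (by constructor <;> omega)]
          congr 1
          rw [show (3*(n:ℤ)-6).toNat = 3*m from by omega,
            show ((n:ℤ)+(k:ℤ)).toNat = m+k+2 from by omega]
          have h3 := Nat.choose_symm (show m-2-(k-m) ≤ 3*m by omega)
          rw [show 3*m - (m-2-(k-m)) = m+k+2 from by omega] at h3
          exact h3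
        have e2 : ichoose ((k:ℤ)-1) ((n:ℤ)-3) = ((m-1+(k-m)).choose (k-m) : ℤ) := by
          unfold ichoose
          rw [if_pos (by constructor <;> omega)]
          congr 1
          rw [show ((k:ℤ)-1).toNat = k-1 from by omega,
            show ((n:ℤ)-3).toNat = m-1 from by omega,
            show m-1+(k-m) = k-1 from by omega]
          have h3 := Nat.choose_symm (show k-m ≤ k-1 by omega)
          rw [show k-1-(k-m) = m-1 from by omega] at h3
          exact h3
        rw [e1, e2]
        push_cast
        ring
      · rw [if_neg hc]
        have hz : ichoose (3*(n:ℤ)-6) ((n:ℤ)+(k:ℤ)) * ichoose ((k:ℤ)-1) ((n:ℤ)-3) = 0 := by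
          by_cases hk : k < m
          · have hz2 : ichoose ((k:ℤ)-1) ((n:ℤ)-3) = 0 := by
              unfold ichoose; rw [if_neg (by rintro ⟨h1, h2⟩; omega)]
            rw [hz2, mul_zero]
          · have hz1 : ichoose (3*(n:ℤ)-6) ((n:ℤ)+(k:ℤ)) = 0 := by
              unfold ichoose; rw [if_neg (by rintro ⟨h1, h2⟩; omega)]
            rw [hz1, zero_mul]
        rw [hz]
        norm_num
    · -- n = 3
      have hn3 : n = 3 := by omega
      subst hn3
      have hy2 : coeff (R := PowerSeries ℚ) 1 (y^2) = 0 := by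
        rw [pow_two, coeff_mul, Finset.Nat.sum_antidiagonal_eq_sum_range_succ_mk]
        rw [Finset.sum_range_succ, Finset.sum_range_one]
        simp [coeff_zero_eq_constantCoeff, h0]
      have hz : ichoose (3*((3:ℕ):ℤ)-6) (((3:ℕ):ℤ)+(k:ℤ)) * ichoose ((k:ℤ)-1) (((3:ℕ):ℤ)-3) = 0 := by
        rcases Nat.eq_zero_or_pos k with hk | hk
        · subst hk
          norm_num [ichoose]
        · have hz1 : ichoose (3*((3:ℕ):ℤ)-6) (((3:ℕ):ℤ)+(k:ℤ)) = 0 := by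
            unfold ichoose; rw [if_neg (by rintro ⟨h1, h2⟩; omega)]
          rw [hz1, zero_mul]
      rw [show m = 1 from by omega, hy2, map_zero, hz]
      norm_num
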